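/- (2-approximation inequality for half-rounding.) Let f : 2^V → ℝ≥0 be non-negative submodular with f(∅) = 0, and x a fractional allocation with Σ_{i=1}^k x(v,i) = 1, x ≥ 0. Then ∫_{1/2}^1 f(U(θ)) dθ ≤ Σ_{i=1}^k ∫_0^{1/2} f(A(i,θ)) dθ, where A(i,θ) = {v : x(v,i) ≥ θ} and U(θ) = V \ ∪_i A(i,θ). Consequently, Σ_{i=1}^{k} 2∫_{1/2}^1 f(A(i,θ)) dθ + 2∫_{1/2}^1 f(U(θ)) dθ ≤ 2 Σ_{i=1}^k ∫_0^1 f(A(i,θ)) dθ. -/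

import Mathlib

open MeasureTheory Set intervalIntegral

namespace HalfRounding

variable {V : Type*} [Fintype V]

/-- Suffix set of an enumeration. -/
def suff {n : ℕ} (e : Fin n ≃ V) (j : ℕ) : Set V := {v | j ≤ ((e.symm v : Fin n) : ℕ)}

lemma suff_empty {n : ℕ} (e : Fin n ≃ V) {j : ℕ} (h : n ≤ j) : suff e j = ∅ := by
  ext v
  simp only [suff, mem_setOf_eq, mem_empty_iff_false, iff_false, not_le]
  exact lt_of_lt_of_le (e.symm v).isLt h

lemma mem_suff_iff {n : ℕ} (e : Fin n ≃ V) {j : ℕ} {l : Fin n} :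
    e l ∈ suff e j ↔ j ≤ (l : ℕ) := by
  simp [suff]

lemma suff_insert {n : ℕ} (e : Fin n ≃ V) {j : ℕ} (h : j < n) :
    suff e j = insert (e ⟨j, h⟩) (suff e (j + 1)) := by
  ext v
  simp only [suff, mem_setOf_eq, mem_insert_iff]
  constructor
  · intro hj
    rcases eq_or_lt_of_le hj with heq | hlt
    · left
      have : e.symm v = ⟨j, h⟩ := Fin.ext heq.symm
      rw [← this, Equiv.apply_symm_apply]
    · right; omega
  · rintro (rfl | hge)
    · simp
    · omega

lemma not_mem_suff_succ {n : ℕ} (e : Fin n ≃ V) (l : Fin n) :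
    e l ∉ suff e ((l : ℕ) + 1) := by
  simp [mem_suff_iff]

/-- Greedy/telescoping upper bound from submodularity. -/
lemma greedy [DecidableEq V] (f : Set V → ℝ)
    (hsub : ∀ A B : Set V, f A + f B ≥ f (A ∩ B) + f (A ∪ B))
    (hempty : f (∅ : Set V) = 0)
    {n : ℕ} (e : Fin n ≃ V) (J : Finset (Fin n)) :
    ∑ l ∈ J, (f (suff e (l : ℕ)) - f (suff e ((l : ℕ) + 1))) ≤ f (↑(J.image e)) := by
  classical
  induction J using Finset.strongInduction with
  | _ J ih =>
    rcases J.eq_empty_or_nonempty with rfl | hJ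
    · simp [hempty]
    · set l0 := J.min' hJ with hl0def
      have hl0 : l0 ∈ J := J.min'_mem hJ
      have hJJ : J = insert l0 (J.erase l0) := (Finset.insert_erase hl0).symm
      have ihJ' := ih (J.erase l0) (Finset.erase_ssubset hl0)
      have himg : (↑((J.erase l0).image e) : Set V) ⊆ suff e ((l0 : ℕ) + 1) := by
        intro v hv
        simp only [Finset.coe_image, mem_image, Finset.mem_coe, Finset.mem_erase] at hv
        obtain ⟨l, ⟨hne, hlJ⟩, rfl⟩ := hv
        rw [mem_suff_iff]
        have : l0 ≤ l := J.min'_le l hlJ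
        have : l0 < l := lt_of_le_of_ne this (fun h => hne h.symm)
        exact this
      have hnm : e l0 ∉ suff e ((l0 : ℕ) + 1) := not_mem_suff_succ e l0
      have key := hsub (suff e ((l0 : ℕ) + 1)) (insert (e l0) (↑((J.erase l0).image e)))
      have hint : suff e ((l0 : ℕ) + 1) ∩ insert (e l0) (↑((J.erase l0).image e))
          = (↑((J.erase l0).image e) : Set V) := by
        ext v
        simp only [mem_inter_iff, mem_insert_iff]
        constructor
        · rintro ⟨hs, rfl | hm⟩
          · exact absurd hs hnm
          · exact hm
        · intro hm; exact ⟨himg hm, Or.inr hm⟩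
      have huni : suff e ((l0 : ℕ) + 1) ∪ insert (e l0) (↑((J.erase l0).image e))
          = suff e (l0 : ℕ) := by
        rw [suff_insert e l0.isLt]
        have : (⟨(l0 : ℕ), l0.isLt⟩ : Fin n) = l0 := Fin.ext rfl
        rw [this]
        rw [Set.union_insert]
        congr 1
        exact Set.union_eq_self_of_subset_right himg
      rw [hint, huni] at key
      have himgJ : (↑(J.image e) : Set V) = insert (e l0) (↑((J.erase l0).image e)) := by
        rw [hJJ, Finset.image_insert, Finset.coe_insert, ← hJJ]
      have hsumJ : ∑ l ∈ J, (f (suff e (l : ℕ)) - f (suff e ((l : ℕ) + 1)))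
          = (f (suff e (l0 : ℕ)) - f (suff e ((l0 : ℕ) + 1)))
            + ∑ l ∈ J.erase l0, (f (suff e (l : ℕ)) - f (suff e ((l : ℕ) + 1))) := by
        conv_lhs => rw [hJJ]
        rw [Finset.sum_insert (Finset.notMem_erase _ _)]
      rw [hsumJ, himgJ]
      linarith

/-- Telescoping identity for upper (suffix) index sets. -/
lemma tele (f : Set V → ℝ) (hempty : f (∅ : Set V) = 0)
    {n : ℕ} (e : Fin n ≃ V) :
    ∀ d j, n ≤ j + d →
      ∑ l ∈ Finset.univ.filter (fun l : Fin n => j ≤ (l : ℕ)),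
          (f (suff e (l : ℕ)) - f (suff e ((l : ℕ) + 1))) = f (suff e j) := by
  intro d
  induction d with
  | zero =>
    intro j hj
    simp only [Nat.add_zero] at hj
    rw [suff_empty e hj, hempty]
    rw [Finset.sum_eq_zero]
    intro l hl
    simp only [Finset.mem_filter] at hl
    exact absurd hl.2 (by omega)
  | succ d ihd =>
    intro j hj
    by_cases hn : n ≤ j + d
    · exact ihd j hn
    · have hjn : j < n := by omega
      have hfil : Finset.univ.filter (fun l : Fin n => j ≤ (l : ℕ))
          = insert (⟨j, hjn⟩ : Fin n) (Finset.univ.filter (fun l : Fin n => j + 1 ≤ (l : ℕ))) := by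
        ext l
        simp only [Finset.mem_filter, Finset.mem_univ, true_and, Finset.mem_insert]
        constructor
        · intro h
          rcases eq_or_lt_of_le h with heq | hlt
          · left; exact Fin.ext heq.symm
          · right; omega
        · rintro (rfl | h)
          · simp
          · omega
      rw [hfil, Finset.sum_insert (by simp)]
      rw [ihd (j + 1) (by omega)]
      ring

/-- Level-set representation of `f {v | t ≤ y v}` for a sorted enumeration. -/
lemma repr_eq (f : Set V → ℝ) (hempty : f (∅ : Set V) = 0)
    {n : ℕ} (e : Fin n ≃ V) (y : V → ℝ) (hmono : Monotone (fun l => y (e l))) (t : ℝ) :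
    f {v | t ≤ y v}
      = ∑ l : Fin n, (f (suff e (l : ℕ)) - f (suff e ((l : ℕ) + 1)))
          * (if t ≤ y (e l) then 1 else 0) := by
  classical
  have hrw : ∑ l : Fin n, (f (suff e (l : ℕ)) - f (suff e ((l : ℕ) + 1)))
          * (if t ≤ y (e l) then 1 else 0)
      = ∑ l ∈ Finset.univ.filter (fun l : Fin n => t ≤ y (e l)),
          (f (suff e (l : ℕ)) - f (suff e ((l : ℕ) + 1))) := by
    rw [Finset.sum_filter]
    apply Finset.sum_congr rfl
    intro l _
    by_cases h : t ≤ y (e l) <;> simp [h]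
  rw [hrw]
  set J := Finset.univ.filter (fun l : Fin n => t ≤ y (e l)) with hJdef
  rcases J.eq_empty_or_nonempty with hJe | hJne
  · have hset : {v : V | t ≤ y v} = (∅ : Set V) := by
      ext v
      simp only [mem_setOf_eq, mem_empty_iff_false, iff_false, not_le]
      by_contra h
      push_neg at h
      have : e.symm v ∈ J := by
        simp only [hJdef, Finset.mem_filter, Finset.mem_univ, true_and,
          Equiv.apply_symm_apply]
        exact h
      rw [hJe] at this
      exact absurd this (Finset.notMem_empty _)
    rw [hset, hempty, hJe, Finset.sum_empty]
  · set l0 := J.min' hJne with hl0def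
    have hl0J : l0 ∈ J := J.min'_mem hJne
    have hl0t : t ≤ y (e l0) := by
      simpa [hJdef] using hl0J
    have hJeq : J = Finset.univ.filter (fun l : Fin n => (l0 : ℕ) ≤ (l : ℕ)) := by
      ext l
      simp only [hJdef, Finset.mem_filter, Finset.mem_univ, true_and]
      constructor
      · intro h
        exact_mod_cast J.min'_le l (by simp [hJdef, h])
      · intro h
        exact le_trans hl0t (hmono (by exact_mod_cast h))
    have hset : {v : V | t ≤ y v} = suff e (l0 : ℕ) := by
      ext v
      simp only [mem_setOf_eq, suff, mem_setOf_eq]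
      constructor
      · intro h
        have : e.symm v ∈ J := by
          simp [hJdef, h]
        rw [hJeq] at this
        simpa using this
      · intro h
        have hle : l0 ≤ e.symm v := by exact_mod_cast h
        have := hmono hle
        simp only [Equiv.apply_symm_apply] at this
        exact le_trans hl0t this
    rw [hset, hJeq]
    exact (tele f hempty e n (l0 : ℕ) (by omega)).symm

/-- Greedy upper bound: the sorted coefficients evaluated on any vector `z`. -/
lemma repr_le (f : Set V → ℝ)
    (hsub : ∀ A B : Set V, f A + f B ≥ f (A ∩ B) + f (A ∪ B))
    (hempty : f (∅ : Set V) = 0)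
    {n : ℕ} (e : Fin n ≃ V) (z : V → ℝ) (t : ℝ) :
    ∑ l : Fin n, (f (suff e (l : ℕ)) - f (suff e ((l : ℕ) + 1)))
        * (if t ≤ z (e l) then 1 else 0) ≤ f {v | t ≤ z v} := by
  classical
  have hrw : ∑ l : Fin n, (f (suff e (l : ℕ)) - f (suff e ((l : ℕ) + 1)))
          * (if t ≤ z (e l) then 1 else 0)
      = ∑ l ∈ Finset.univ.filter (fun l : Fin n => t ≤ z (e l)),
          (f (suff e (l : ℕ)) - f (suff e ((l : ℕ) + 1))) := by
    rw [Finset.sum_filter]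
    apply Finset.sum_congr rfl
    intro l _
    by_cases h : t ≤ z (e l) <;> simp [h]
  rw [hrw]
  have himg : (↑((Finset.univ.filter (fun l : Fin n => t ≤ z (e l))).image e) : Set V)
      = {v | t ≤ z v} := by
    ext v
    simp only [Finset.coe_image, mem_image, Finset.mem_coe, Finset.mem_filter,
      Finset.mem_univ, true_and, mem_setOf_eq]
    constructor
    · rintro ⟨l, hl, rfl⟩; exact hl
    · intro h; exact ⟨e.symm v, by simpa using h, by simp⟩
  calc _ ≤ f (↑((Finset.univ.filter (fun l : Fin n => t ≤ z (e l))).image e)) :=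
        greedy f hsub hempty e _
    _ = f {v | t ≤ z v} := by rw [himg]


/-- The basic indicator-type function. -/
lemma ind_intble (c a b : ℝ) :
    IntervalIntegrable (fun t : ℝ => if t ≤ c then (1 : ℝ) else 0) volume a b := by
  apply Antitone.intervalIntegrable
  intro s t hst
  by_cases ht : t ≤ c
  · simp [ht, le_trans hst ht]
  · by_cases hs : s ≤ c <;> simp [ht, hs]

lemma intble_sum {ι : Type*} (s : Finset ι) (g : ι → ℝ → ℝ) (a b : ℝ)
    (h : ∀ i ∈ s, IntervalIntegrable (g i) volume a b) :
    IntervalIntegrable (fun t => ∑ i ∈ s, g i t) volume a b := by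
  have heq : (fun t => ∑ i ∈ s, g i t) = ∑ i ∈ s, g i := by
    funext t
    exact (Finset.sum_apply _ _ _).symm
  rw [heq]
  exact IntervalIntegrable.sum s h

lemma ind_integral {c : ℝ} (h0 : 0 ≤ c) (h1 : c ≤ 1) :
    ∫ t in (0:ℝ)..1, (if t ≤ c then (1 : ℝ) else 0) = c := by
  have hsplit := integral_add_adjacent_intervals (a := (0:ℝ)) (b := c) (c := 1)
    (ind_intble c 0 c) (ind_intble c c 1)
  have h1' : ∫ t in (0:ℝ)..c, (if t ≤ c then (1 : ℝ) else 0) = c := by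
    rw [integral_congr (g := fun _ => (1:ℝ))]
    · simp
    · intro t ht
      rw [uIcc_of_le h0] at ht
      simp [ht.2]
  have h2' : ∫ t in c..(1:ℝ), (if t ≤ c then (1 : ℝ) else 0) = 0 := by
    rw [intervalIntegral.integral_congr_ae (g := fun _ => (0:ℝ))]
    · simp
    · filter_upwards with t ht
      rw [uIoc_of_le h1] at ht
      simp [not_le.mpr ht.1]
  rw [← hsplit, h1', h2', add_zero]

/-- The level-set profile function. -/
def Phi (f : Set V → ℝ) (y : V → ℝ) : ℝ → ℝ := fun t => f {v | t ≤ y v}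

lemma exists_sorted (y : V → ℝ) :
    ∃ e : Fin (Fintype.card V) ≃ V, Monotone fun l => y (e l) := by
  classical
  let e0 : Fin (Fintype.card V) ≃ V := (Fintype.equivFin V).symm
  refine ⟨(Tuple.sort (fun l => y (e0 l))).trans e0, ?_⟩
  have h := Tuple.monotone_sort (fun l => y (e0 l))
  exact h

lemma Phi_intble (f : Set V → ℝ) (hempty : f (∅ : Set V) = 0) (y : V → ℝ) (a b : ℝ) :
    IntervalIntegrable (Phi f y) volume a b := by
  obtain ⟨e, he⟩ := exists_sorted y
  have hrepr : Phi f y = fun t => ∑ l : Fin (Fintype.card V),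
      (f (suff e (l : ℕ)) - f (suff e ((l : ℕ) + 1))) * (if t ≤ y (e l) then 1 else 0) :=
    funext (repr_eq f hempty e y he)
  rw [hrepr]
  exact intble_sum _ _ a b (fun l _ => (ind_intble (y (e l)) a b).const_mul _)

lemma Phi_int_nonneg (f : Set V → ℝ) (hnonneg : ∀ S : Set V, 0 ≤ f S) (y : V → ℝ)
    {a b : ℝ} (hab : a ≤ b) : 0 ≤ ∫ t in a..b, Phi f y t :=
  integral_nonneg hab (fun t _ => hnonneg _)

/-- Subadditivity of the Lovász-type extension. -/
lemma Phi_subadd (f : Set V → ℝ)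
    (hsub : ∀ A B : Set V, f A + f B ≥ f (A ∩ B) + f (A ∪ B))
    (hempty : f (∅ : Set V) = 0)
    (a b : V → ℝ) (ha0 : ∀ v, 0 ≤ a v) (hb0 : ∀ v, 0 ≤ b v)
    (hab1 : ∀ v, a v + b v ≤ 1) :
    (∫ t in (0:ℝ)..1, Phi f (fun v => a v + b v) t)
      ≤ (∫ t in (0:ℝ)..1, Phi f a t) + ∫ t in (0:ℝ)..1, Phi f b t := by
  obtain ⟨e, he⟩ := exists_sorted (fun v => a v + b v)
  have ha1 : ∀ v, a v ≤ 1 := fun v => le_trans (le_add_of_nonneg_right (hb0 v)) (hab1 v)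
  have hb1 : ∀ v, b v ≤ 1 := fun v => le_trans (le_add_of_nonneg_left (ha0 v)) (hab1 v)
  have key : ∀ (z : V → ℝ), (∀ v, 0 ≤ z v) → (∀ v, z v ≤ 1) →
      (∫ t in (0:ℝ)..1, ∑ l : Fin (Fintype.card V),
          (f (suff e (l : ℕ)) - f (suff e ((l : ℕ) + 1))) * (if t ≤ z (e l) then 1 else 0))
        = ∑ l : Fin (Fintype.card V),
          (f (suff e (l : ℕ)) - f (suff e ((l : ℕ) + 1))) * z (e l) := by
    intro z hz0 hz1
    rw [integral_finset_sum (fun l _ => (ind_intble (z (e l)) 0 1).const_mul _)]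
    apply Finset.sum_congr rfl
    intro l _
    rw [intervalIntegral.integral_const_mul, ind_integral (hz0 _) (hz1 _)]
  have hstep1 : (∫ t in (0:ℝ)..1, Phi f (fun v => a v + b v) t)
      = ∑ l : Fin (Fintype.card V),
          (f (suff e (l : ℕ)) - f (suff e ((l : ℕ) + 1))) * (a (e l) + b (e l)) := by
    have hrepr : Phi f (fun v => a v + b v) = fun t => ∑ l : Fin (Fintype.card V),
        (f (suff e (l : ℕ)) - f (suff e ((l : ℕ) + 1)))
          * (if t ≤ a (e l) + b (e l) then 1 else 0) :=
      funext (repr_eq f hempty e _ he)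
    rw [hrepr]
    exact key (fun v => a v + b v) (fun v => add_nonneg (ha0 v) (hb0 v)) hab1
  have hstep2 : ∀ (z : V → ℝ), (∀ v, 0 ≤ z v) → (∀ v, z v ≤ 1) →
      ∑ l : Fin (Fintype.card V),
          (f (suff e (l : ℕ)) - f (suff e ((l : ℕ) + 1))) * z (e l)
        ≤ ∫ t in (0:ℝ)..1, Phi f z t := by
    intro z hz0 hz1
    rw [← key z hz0 hz1]
    have hi1 : IntervalIntegrable (fun t => ∑ l : Fin (Fintype.card V),
        (f (suff e (l : ℕ)) - f (suff e ((l : ℕ) + 1)))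
          * (if t ≤ z (e l) then 1 else 0)) volume 0 1 :=
      intble_sum _ _ 0 1 (fun l _ => (ind_intble (z (e l)) 0 1).const_mul _)
    apply integral_mono_on (by norm_num) hi1 (Phi_intble f hempty z 0 1)
    intro t _
    exact repr_le f hsub hempty e z t
  calc (∫ t in (0:ℝ)..1, Phi f (fun v => a v + b v) t)
      = ∑ l : Fin (Fintype.card V),
          (f (suff e (l : ℕ)) - f (suff e ((l : ℕ) + 1))) * (a (e l) + b (e l)) := hstep1
    _ = (∑ l : Fin (Fintype.card V),
          (f (suff e (l : ℕ)) - f (suff e ((l : ℕ) + 1))) * a (e l))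
        + ∑ l : Fin (Fintype.card V),
          (f (suff e (l : ℕ)) - f (suff e ((l : ℕ) + 1))) * b (e l) := by
        rw [← Finset.sum_add_distrib]
        apply Finset.sum_congr rfl
        intro l _
        ring
    _ ≤ (∫ t in (0:ℝ)..1, Phi f a t) + ∫ t in (0:ℝ)..1, Phi f b t :=
        add_le_add (hstep2 a ha0 ha1) (hstep2 b hb0 hb1)
/-- Lattice submodularity of the profile integrals. -/
lemma Phi_latt (f : Set V → ℝ)
    (hsub : ∀ A B : Set V, f A + f B ≥ f (A ∩ B) + f (A ∪ B))
    (hempty : f (∅ : Set V) = 0)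
    (a b : V → ℝ) {lo hi : ℝ} (hlohi : lo ≤ hi) :
    (∫ t in lo..hi, Phi f (fun v => min (a v) (b v)) t)
        + (∫ t in lo..hi, Phi f (fun v => max (a v) (b v)) t)
      ≤ (∫ t in lo..hi, Phi f a t) + ∫ t in lo..hi, Phi f b t := by
  have hpt : ∀ t, Phi f (fun v => min (a v) (b v)) t + Phi f (fun v => max (a v) (b v)) t
      ≤ Phi f a t + Phi f b t := by
    intro t
    have h1 : {v : V | t ≤ min (a v) (b v)} = {v | t ≤ a v} ∩ {v | t ≤ b v} := by
      ext v; simp [le_min_iff]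
    have h2 : {v : V | t ≤ max (a v) (b v)} = {v | t ≤ a v} ∪ {v | t ≤ b v} := by
      ext v; simp [le_max_iff]
    have := hsub {v | t ≤ a v} {v | t ≤ b v}
    simp only [Phi, h1, h2]
    linarith
  have hmono := integral_mono_on (μ := volume) hlohi
    ((Phi_intble f hempty _ lo hi).add (Phi_intble f hempty _ lo hi))
    ((Phi_intble f hempty a lo hi).add (Phi_intble f hempty b lo hi))
    (f := fun t => Phi f (fun v => min (a v) (b v)) t + Phi f (fun v => max (a v) (b v)) t)
    (g := fun t => Phi f a t + Phi f b t)
    (fun t _ => hpt t)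
  rwa [integral_add (Phi_intble f hempty _ lo hi) (Phi_intble f hempty _ lo hi),
    integral_add (Phi_intble f hempty a lo hi) (Phi_intble f hempty b lo hi)] at hmono

/-- Vanishing of the profile integral beyond an upper bound of `y`. -/
lemma Phi_zero_tail (f : Set V → ℝ) (hempty : f (∅ : Set V) = 0)
    (y : V → ℝ) {c b : ℝ} (hy : ∀ v, y v ≤ c) (hcb : c ≤ b) :
    ∫ t in c..b, Phi f y t = 0 := by
  rw [intervalIntegral.integral_congr_ae (g := fun _ => (0:ℝ))]
  · simp
  · filter_upwards with t ht
    rw [uIoc_of_le hcb] at ht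
    have : {v : V | t ≤ y v} = (∅ : Set V) := by
      ext v
      simp only [mem_setOf_eq, mem_empty_iff_false, iff_false, not_le]
      exact lt_of_le_of_lt (hy v) ht.1
    simp [Phi, this, hempty]

/-- Iterated subadditivity. -/
lemma Phi_subadd_sum (f : Set V → ℝ)
    (hsub : ∀ A B : Set V, f A + f B ≥ f (A ∩ B) + f (A ∪ B))
    (hempty : f (∅ : Set V) = 0)
    (J : Finset ℕ) (c : ℕ → V → ℝ)
    (hc0 : ∀ j v, 0 ≤ c j v) (hsum1 : ∀ v, ∑ j ∈ J, c j v ≤ 1) :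
    (∫ t in (0:ℝ)..1, Phi f (fun v => ∑ j ∈ J, c j v) t)
      ≤ ∑ j ∈ J, ∫ t in (0:ℝ)..1, Phi f (c j) t := by
  classical
  induction J using Finset.induction_on with
  | empty =>
    simp only [Finset.sum_empty]
    rw [Phi_zero_tail f hempty (fun _ => (0:ℝ)) (fun _ => le_refl 0) (by norm_num)]
  | insert j J hj ih =>
    have hsum1' : ∀ v, ∑ j' ∈ J, c j' v ≤ 1 := by
      intro v
      calc ∑ j' ∈ J, c j' v ≤ c j v + ∑ j' ∈ J, c j' v := le_add_of_nonneg_left (hc0 j v)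
        _ = ∑ j' ∈ insert j J, c j' v := (Finset.sum_insert (f := fun j' => c j' v) hj).symm
        _ ≤ 1 := hsum1 v
    have hfun : (fun v => ∑ j' ∈ insert j J, c j' v)
        = fun v => c j v + ∑ j' ∈ J, c j' v := by
      funext v
      exact Finset.sum_insert (f := fun j' => c j' v) hj
    rw [hfun, Finset.sum_insert hj]
    calc (∫ t in (0:ℝ)..1, Phi f (fun v => c j v + ∑ j' ∈ J, c j' v) t)
        ≤ (∫ t in (0:ℝ)..1, Phi f (c j) t)
            + ∫ t in (0:ℝ)..1, Phi f (fun v => ∑ j' ∈ J, c j' v) t := by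
          apply Phi_subadd f hsub hempty (c j) (fun v => ∑ j' ∈ J, c j' v) (hc0 j)
            (fun v => Finset.sum_nonneg (fun j' _ => hc0 j' v))
          intro v
          rw [← Finset.sum_insert (f := fun j' => c j' v) hj]
          exact hsum1 v
      _ ≤ (∫ t in (0:ℝ)..1, Phi f (c j) t)
            + ∑ j' ∈ J, ∫ t in (0:ℝ)..1, Phi f (c j') t := by
          have := ih hsum1'
          linarith
end HalfRounding

namespace HalfRounding

/-- Running maximum of a sequence of vectors. -/
def Mx {V : Type*} (X : ℕ → V → ℝ) : ℕ → V → ℝ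
  | 0 => fun _ => 0
  | j + 1 => fun v => max (Mx X j v) (X j v)

lemma Mx_nonneg {V : Type*} (X : ℕ → V → ℝ) (hX0 : ∀ j v, 0 ≤ X j v) :
    ∀ j v, 0 ≤ Mx X j v := by
  intro j
  induction j with
  | zero => intro v; simp [Mx]
  | succ j ih => intro v; exact le_trans (ih v) (le_max_left _ _)

lemma Mx_le_one {V : Type*} (X : ℕ → V → ℝ) (hX1 : ∀ j v, X j v ≤ 1) :
    ∀ j v, Mx X j v ≤ 1 := by
  intro j
  induction j with
  | zero => intro v; simp [Mx]
  | succ j ih => intro v; exact max_le (ih v) (hX1 j v)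

lemma Mx_lt_iff {V : Type*} (X : ℕ → V → ℝ) (j : ℕ) (v : V) (θ : ℝ) :
    Mx X j v < θ ↔ 0 < θ ∧ ∀ j' < j, X j' v < θ := by
  induction j with
  | zero => simp [Mx]
  | succ j ih =>
    simp only [Mx, max_lt_iff, ih]
    constructor
    · rintro ⟨⟨h0, hall⟩, hj⟩
      refine ⟨h0, ?_⟩
      intro j' hj'
      rcases Nat.lt_succ_iff_lt_or_eq.mp hj' with h | rfl
      · exact hall j' h
      · exact hj
    · rintro ⟨h0, hall⟩
      exact ⟨⟨h0, fun j' hj' => hall j' (Nat.lt_succ_of_lt hj')⟩, hall j (Nat.lt_succ_self j)⟩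

lemma Mx_choice {V : Type*} (X : ℕ → V → ℝ) (j : ℕ) (v : V) :
    Mx X j v = 0 ∨ ∃ j' < j, Mx X j v = X j' v := by
  induction j with
  | zero => left; rfl
  | succ j ih =>
    rcases max_choice (Mx X j v) (X j v) with h | h
    · rcases ih with h0 | ⟨j', hj', he⟩
      · left; rw [show Mx X (j+1) v = max (Mx X j v) (X j v) from rfl, h, h0]
      · right; exact ⟨j', Nat.lt_succ_of_lt hj', by rw [show Mx X (j+1) v = max (Mx X j v) (X j v) from rfl, h, he]⟩
    · right; exact ⟨j, Nat.lt_succ_self j, by rw [show Mx X (j+1) v = max (Mx X j v) (X j v) from rfl, h]⟩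

end HalfRounding

open HalfRounding


/-- Half-rounding bound for non-negative submodular `f` with `f(∅) = 0`:
`∫_{1/2}^1 f(U(θ)) dθ ≤ Σ_{i=1}^k ∫_0^{1/2} f(A(i,θ)) dθ`, and consequently
`Σ_i 2∫_{1/2}^1 f(A(i,θ)) dθ + 2∫_{1/2}^1 f(U(θ)) dθ ≤ 2 Σ_i ∫_0^1 f(A(i,θ)) dθ`. -/
theorem half_rounding_two_approx {V : Type*} [Fintype V] {k : ℕ} (hk : 1 ≤ k)
    (f : Set V → ℝ)
    (hsub : ∀ A B : Set V, f A + f B ≥ f (A ∩ B) + f (A ∪ B))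
    (hnonneg : ∀ S : Set V, 0 ≤ f S) (hempty : f (∅ : Set V) = 0)
    (x : V → Fin k → ℝ)
    (hx0 : ∀ v i, 0 ≤ x v i) (hxsum : ∀ v, ∑ i, x v i = 1) :
    ((∫ θ in (1/2 : ℝ)..1, f {v : V | ∀ i : Fin k, x v i < θ}) ≤
      ∑ i : Fin k, ∫ θ in (0:ℝ)..(1/2 : ℝ), f {v : V | θ ≤ x v i}) ∧
    ((∑ i : Fin k, 2 * ∫ θ in (1/2 : ℝ)..1, f {v : V | θ ≤ x v i})
        + 2 * (∫ θ in (1/2 : ℝ)..1, f {v : V | ∀ i : Fin k, x v i < θ}) ≤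
      2 * ∑ i : Fin k, ∫ θ in (0:ℝ)..1, f {v : V | θ ≤ x v i}) := by
  classical
  set X : ℕ → V → ℝ := fun j v => if h : j < k then x v ⟨j, h⟩ else 0 with hXdef
  have hX0 : ∀ j v, 0 ≤ X j v := by
    intro j v
    by_cases h : j < k <;> simp [hXdef, h, hx0]
  have hXsum : ∀ v, ∑ j ∈ Finset.range k, X j v = 1 := by
    intro v
    rw [← Fin.sum_univ_eq_sum_range (fun j => X j v) k, ← hxsum v]
    apply Finset.sum_congr rfl
    intro i _
    simp [hXdef, i.isLt]
  have hX1 : ∀ j v, X j v ≤ 1 := by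
    intro j v
    by_cases h : j < k
    · calc X j v ≤ ∑ j' ∈ Finset.range k, X j' v :=
          Finset.single_le_sum (fun j' _ => hX0 j' v) (Finset.mem_range.mpr h)
        _ = 1 := hXsum v
    · simp [hXdef, h]
  set c : ℕ → V → ℝ := fun j v => min (X j v) (Mx X j v) with hcdef
  have hc0 : ∀ j v, 0 ≤ c j v := fun j v => le_min (hX0 j v) (Mx_nonneg X hX0 j v)
  have hMx1eq : Mx X 1 = X 0 := by
    funext v
    show max (Mx X 0 v) (X 0 v) = X 0 v
    rw [show Mx X 0 v = 0 from rfl]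
    exact max_eq_right (hX0 0 v)
  have hcsum : ∀ v, ∑ j ∈ Finset.Ico 1 k, c j v = 1 - Mx X k v := by
    intro v
    have hdecomp : ∀ j, c j v = X j v + (Mx X j v - Mx X (j+1) v) := by
      intro j
      have h2 := min_add_max (X j v) (Mx X j v)
      have h1 : Mx X (j + 1) v = max (X j v) (Mx X j v) := by
        rw [show Mx X (j+1) v = max (Mx X j v) (X j v) from rfl]
        exact max_comm _ _
      have h3 : c j v = min (X j v) (Mx X j v) := rfl
      rw [h3, h1]
      linarith
    calc ∑ j ∈ Finset.Ico 1 k, c j v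
        = ∑ j ∈ Finset.Ico 1 k, (X j v + (Mx X j v - Mx X (j+1) v)) :=
          Finset.sum_congr rfl (fun j _ => hdecomp j)
      _ = (∑ j ∈ Finset.Ico 1 k, X j v)
            + ∑ j ∈ Finset.Ico 1 k, (Mx X j v - Mx X (j+1) v) := Finset.sum_add_distrib
      _ = 1 - Mx X k v := by
          rw [Finset.sum_Ico_eq_sub (fun j => X j v) hk,
            Finset.sum_Ico_eq_sub (fun j => Mx X j v - Mx X (j+1) v) hk,
            Finset.sum_range_sub' (fun j => Mx X j v) k,
            Finset.sum_range_sub' (fun j => Mx X j v) 1,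
            hXsum v, Finset.sum_range_one]
          have h0 : Mx X 0 v = 0 := rfl
          have h1 : Mx X 1 v = X 0 v := by rw [hMx1eq]
          rw [h0, h1]
          ring
  have hchalf : ∀ j, 1 ≤ j → j < k → ∀ v, c j v ≤ 1/2 := by
    intro j h1j hjk v
    rcases Mx_choice X j v with h0 | ⟨j', hj', he⟩
    · have h : c j v ≤ Mx X j v := min_le_right _ _
      rw [h0] at h
      linarith
    · have hne : j ≠ j' := by omega
      have hpair : ({j, j'} : Finset ℕ) ⊆ Finset.range k := by
        intro a ha
        simp only [Finset.mem_insert, Finset.mem_singleton] at ha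
        rcases ha with rfl | rfl
        · exact Finset.mem_range.mpr hjk
        · exact Finset.mem_range.mpr (lt_trans hj' hjk)
      have hsum2 : X j v + X j' v ≤ 1 := by
        calc X j v + X j' v = ∑ a ∈ ({j, j'} : Finset ℕ), X a v :=
              (Finset.sum_pair (f := fun a => X a v) hne).symm
          _ ≤ ∑ a ∈ Finset.range k, X a v :=
              Finset.sum_le_sum_of_subset_of_nonneg hpair (fun a _ _ => hX0 a v)
          _ = 1 := hXsum v
      have hm1 : c j v ≤ X j v := min_le_left _ _
      have hm2 : c j v ≤ X j' v := by
        have h : c j v ≤ Mx X j v := min_le_right _ _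
        rw [he] at h
        exact h
      linarith
  have hU : ∀ θ : ℝ, {v : V | ∀ i : Fin k, x v i < θ} = {v : V | Mx X k v < θ} := by
    intro θ
    ext v
    simp only [mem_setOf_eq, Mx_lt_iff X k v θ]
    constructor
    · intro h
      have h0 : 0 < θ := lt_of_le_of_lt (hx0 v ⟨0, hk⟩) (h ⟨0, hk⟩)
      refine ⟨h0, fun j hj => ?_⟩
      have hXe : X j v = x v ⟨j, hj⟩ := by simp [hXdef, hj]
      rw [hXe]
      exact h _
    · rintro ⟨h0, h⟩ i
      have h' := h (i : ℕ) i.isLt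
      have hXe : X (i : ℕ) v = x v i := by simp [hXdef, i.isLt]
      rwa [hXe] at h'
  set w : V → ℝ := fun v => 1 - Mx X k v with hwdef
  have hLHS : (∫ θ in (1/2 : ℝ)..1, f {v : V | ∀ i : Fin k, x v i < θ})
      = ∫ s in (0:ℝ)..(1/2 : ℝ), f {v : V | Mx X k v < 1 - s} := by
    have h1 : (fun θ => f {v : V | ∀ i : Fin k, x v i < θ})
        = fun θ => f {v : V | Mx X k v < θ} := funext fun θ => congrArg f (hU θ)
    have h2 := intervalIntegral.integral_comp_sub_left (a := (0:ℝ)) (b := (1/2:ℝ))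
      (fun θ => f {v : V | Mx X k v < θ}) 1
    norm_num at h2
    rw [h1, ← h2]
  have hae : (∫ s in (0:ℝ)..(1/2 : ℝ), f {v : V | Mx X k v < 1 - s})
      = ∫ s in (0:ℝ)..(1/2 : ℝ), Phi f w s := by
    apply intervalIntegral.integral_congr_ae
    have hfin : (Set.range w).Countable := (Set.finite_range w).countable
    filter_upwards [hfin.ae_notMem volume] with s hs _
    have hset : {v : V | Mx X k v < 1 - s} = {v : V | s ≤ w v} := by
      ext v
      simp only [mem_setOf_eq, hwdef]
      constructor
      · intro h
        linarith
      · intro h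
        have hne : s ≠ w v := fun hc => hs ⟨v, hc.symm⟩
        have hlt : s < w v := lt_of_le_of_ne h hne
        simp only [hwdef] at hlt
        linarith
    exact congrArg f hset
  have hw_eq_sum : w = fun v => ∑ j ∈ Finset.Ico 1 k, c j v := by
    funext v
    exact (hcsum v).symm
  have hsub1 : (∫ s in (0:ℝ)..(1/2 : ℝ), Phi f w s) ≤ ∫ s in (0:ℝ)..1, Phi f w s := by
    have hadd := integral_add_adjacent_intervals (a := (0:ℝ)) (b := (1/2:ℝ)) (c := (1:ℝ))
      (Phi_intble f hempty w 0 (1/2)) (Phi_intble f hempty w (1/2) 1)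
    have hnn := Phi_int_nonneg f hnonneg w (by norm_num : (1/2:ℝ) ≤ 1)
    linarith
  have hsub2 : (∫ s in (0:ℝ)..1, Phi f w s)
      ≤ ∑ j ∈ Finset.Ico 1 k, ∫ s in (0:ℝ)..1, Phi f (c j) s := by
    rw [hw_eq_sum]
    apply Phi_subadd_sum f hsub hempty _ c hc0
    intro v
    rw [hcsum v]
    linarith [Mx_nonneg X hX0 k v]
  have hsplit_c : ∀ j, 1 ≤ j → j < k →
      (∫ s in (0:ℝ)..1, Phi f (c j) s) = ∫ s in (0:ℝ)..(1/2 : ℝ), Phi f (c j) s := by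
    intro j h1j hjk
    have hadd := integral_add_adjacent_intervals (a := (0:ℝ)) (b := (1/2:ℝ)) (c := (1:ℝ))
      (Phi_intble f hempty (c j) 0 (1/2)) (Phi_intble f hempty (c j) (1/2) 1)
    have hz := Phi_zero_tail f hempty (c j) (hchalf j h1j hjk) (by norm_num : (1/2:ℝ) ≤ 1)
    linarith
  have hlatt : ∀ j, (∫ s in (0:ℝ)..(1/2 : ℝ), Phi f (c j) s)
      ≤ (∫ s in (0:ℝ)..(1/2 : ℝ), Phi f (X j) s)
        + ((∫ s in (0:ℝ)..(1/2 : ℝ), Phi f (Mx X j) s)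
            - ∫ s in (0:ℝ)..(1/2 : ℝ), Phi f (Mx X (j+1)) s) := by
    intro j
    have h := Phi_latt f hsub hempty (X j) (Mx X j) (by norm_num : (0:ℝ) ≤ 1/2)
    have hmin : (fun v => min (X j v) (Mx X j v)) = c j := rfl
    have hmax : (fun v => max (X j v) (Mx X j v)) = Mx X (j+1) := by
      funext v
      rw [max_comm]
      rfl
    rw [hmin, hmax] at h
    linarith
  have htel : ∑ j ∈ Finset.Ico 1 k,
        ((∫ s in (0:ℝ)..(1/2 : ℝ), Phi f (Mx X j) s)
          - ∫ s in (0:ℝ)..(1/2 : ℝ), Phi f (Mx X (j+1)) s)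
      = (∫ s in (0:ℝ)..(1/2 : ℝ), Phi f (Mx X 1) s)
        - ∫ s in (0:ℝ)..(1/2 : ℝ), Phi f (Mx X k) s := by
    rw [Finset.sum_Ico_eq_sub
        (fun j => (∫ s in (0:ℝ)..(1/2 : ℝ), Phi f (Mx X j) s)
          - ∫ s in (0:ℝ)..(1/2 : ℝ), Phi f (Mx X (j+1)) s) hk,
      Finset.sum_range_sub' (fun j => ∫ s in (0:ℝ)..(1/2 : ℝ), Phi f (Mx X j) s) k,
      Finset.sum_range_sub' (fun j => ∫ s in (0:ℝ)..(1/2 : ℝ), Phi f (Mx X j) s) 1]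
    ring
  have hsum3 : ∑ j ∈ Finset.Ico 1 k, (∫ s in (0:ℝ)..(1/2 : ℝ), Phi f (c j) s)
      ≤ ∑ j ∈ Finset.range k, ∫ s in (0:ℝ)..(1/2 : ℝ), Phi f (X j) s := by
    have hPk : 0 ≤ ∫ s in (0:ℝ)..(1/2 : ℝ), Phi f (Mx X k) s :=
      Phi_int_nonneg f hnonneg _ (by norm_num)
    have hQ0 : (∫ s in (0:ℝ)..(1/2 : ℝ), Phi f (Mx X 1) s)
        = ∫ s in (0:ℝ)..(1/2 : ℝ), Phi f (X 0) s := by rw [hMx1eq]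
    have hrange : ∑ j ∈ Finset.range k, (∫ s in (0:ℝ)..(1/2 : ℝ), Phi f (X j) s)
        = (∫ s in (0:ℝ)..(1/2 : ℝ), Phi f (X 0) s)
          + ∑ j ∈ Finset.Ico 1 k, ∫ s in (0:ℝ)..(1/2 : ℝ), Phi f (X j) s := by
      rw [Finset.sum_Ico_eq_sub (fun j => ∫ s in (0:ℝ)..(1/2 : ℝ), Phi f (X j) s) hk,
        Finset.sum_range_one]
      ring
    calc ∑ j ∈ Finset.Ico 1 k, (∫ s in (0:ℝ)..(1/2 : ℝ), Phi f (c j) s)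
        ≤ ∑ j ∈ Finset.Ico 1 k, ((∫ s in (0:ℝ)..(1/2 : ℝ), Phi f (X j) s)
            + ((∫ s in (0:ℝ)..(1/2 : ℝ), Phi f (Mx X j) s)
              - ∫ s in (0:ℝ)..(1/2 : ℝ), Phi f (Mx X (j+1)) s)) :=
          Finset.sum_le_sum (fun j _ => hlatt j)
      _ = (∑ j ∈ Finset.Ico 1 k, ∫ s in (0:ℝ)..(1/2 : ℝ), Phi f (X j) s)
            + ((∫ s in (0:ℝ)..(1/2 : ℝ), Phi f (Mx X 1) s)
              - ∫ s in (0:ℝ)..(1/2 : ℝ), Phi f (Mx X k) s) := by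
          rw [Finset.sum_add_distrib, htel]
      _ ≤ ∑ j ∈ Finset.range k, ∫ s in (0:ℝ)..(1/2 : ℝ), Phi f (X j) s := by
          rw [hrange, hQ0]
          linarith
  have hXfun : ∀ i : Fin k, X (i : ℕ) = fun v => x v i := by
    intro i
    funext v
    simp [hXdef, i.isLt]
  have hfin_sum : ∑ j ∈ Finset.range k, (∫ s in (0:ℝ)..(1/2 : ℝ), Phi f (X j) s)
      = ∑ i : Fin k, ∫ θ in (0:ℝ)..(1/2 : ℝ), f {v : V | θ ≤ x v i} := by
    rw [← Fin.sum_univ_eq_sum_range (fun j => ∫ s in (0:ℝ)..(1/2 : ℝ), Phi f (X j) s) k]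
    apply Finset.sum_congr rfl
    intro i _
    rw [hXfun i]
    rfl
  have conj1 : (∫ θ in (1/2 : ℝ)..1, f {v : V | ∀ i : Fin k, x v i < θ}) ≤
      ∑ i : Fin k, ∫ θ in (0:ℝ)..(1/2 : ℝ), f {v : V | θ ≤ x v i} := by
    rw [hLHS, hae, ← hfin_sum]
    calc (∫ s in (0:ℝ)..(1/2 : ℝ), Phi f w s)
        ≤ ∫ s in (0:ℝ)..1, Phi f w s := hsub1
      _ ≤ ∑ j ∈ Finset.Ico 1 k, ∫ s in (0:ℝ)..1, Phi f (c j) s := hsub2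
      _ = ∑ j ∈ Finset.Ico 1 k, ∫ s in (0:ℝ)..(1/2 : ℝ), Phi f (c j) s := by
          apply Finset.sum_congr rfl
          intro j hj
          rw [Finset.mem_Ico] at hj
          exact hsplit_c j hj.1 hj.2
      _ ≤ ∑ j ∈ Finset.range k, ∫ s in (0:ℝ)..(1/2 : ℝ), Phi f (X j) s := hsum3
  refine ⟨conj1, ?_⟩
  have hsplit_x : ∀ i : Fin k, (∫ θ in (0:ℝ)..1, f {v : V | θ ≤ x v i})
      = (∫ θ in (0:ℝ)..(1/2 : ℝ), f {v : V | θ ≤ x v i})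
        + ∫ θ in (1/2 : ℝ)..1, f {v : V | θ ≤ x v i} := by
    intro i
    exact (integral_add_adjacent_intervals
      (Phi_intble f hempty (fun v => x v i) 0 (1/2))
      (Phi_intble f hempty (fun v => x v i) (1/2) 1)).symm
  have hsum01 : ∑ i : Fin k, (∫ θ in (0:ℝ)..1, f {v : V | θ ≤ x v i})
      = (∑ i : Fin k, ∫ θ in (0:ℝ)..(1/2 : ℝ), f {v : V | θ ≤ x v i})
        + ∑ i : Fin k, ∫ θ in (1/2 : ℝ)..1, f {v : V | θ ≤ x v i} := by
    rw [← Finset.sum_add_distrib]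
    exact Finset.sum_congr rfl (fun i _ => hsplit_x i)
  have hmul : ∑ i : Fin k, 2 * (∫ θ in (1/2 : ℝ)..1, f {v : V | θ ≤ x v i})
      = 2 * ∑ i : Fin k, ∫ θ in (1/2 : ℝ)..1, f {v : V | θ ≤ x v i} :=
    (Finset.mul_sum _ _ _).symm
  rw [hmul, hsum01]
  linarith [conj1]
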